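/- For every n ≥ 0 and every x ∈ ℤ, under P^x the process Z_k := v_{n−k}(W_k)·∏_{j=1}^{k} (1 − H(v_{n−j}(W_j))), for k = 0, 1, …, n (empty product = 1), is a martingale with respect to the natural filtration of (W_k). Consequently, for all integers 0 ≤ n ≤ m and all x ∈ ℤ, v_m(x) = E^x[ v_n(W_{m−n})·∏_{j=1}^{m−n} (1 − H(v_{m−j}(W_j))) ]. -/

import Mathlib

open Filter Real Set MeasureTheory ProbabilityTheory
open scoped ENNReal NNReal

/-- The random walk started at `x` with increments `ξ 1, ξ 2, …`:
`walk ξ x n ω = x + ξ₁(ω) + ⋯ + ξₙ(ω)`. -/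
def walk {Ω : Type} (ξ : ℕ → Ω → ℤ) (x : ℤ) (n : ℕ) (ω : Ω) : ℤ :=
  x + ∑ i ∈ Finset.Icc 1 n, ξ i ω

/-- `Hfun p s = (s - Q(s))/s` where `Q(s) = 1 - Σₖ pₖ (1-s)ᵏ`, with `Hfun p 0 = 0`. -/
noncomputable def Hfun (p : ℕ → ℝ) (s : ℝ) : ℝ :=
  if s = 0 then 0 else (s - (1 - ∑' k : ℕ, p k * (1 - s) ^ k)) / s

/-- The natural filtration generated by the random walk `walk ξ x`. -/
noncomputable def walkFiltration {Ω : Type} [m0 : MeasurableSpace Ω] (ξ : ℕ → Ω → ℤ)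
    (hξmeas : ∀ n, Measurable (ξ n)) (x : ℤ) : Filtration ℕ m0 :=
  Filtration.natural (fun n => walk ξ x n) (fun n => by
    have h : Measurable (walk ξ x n) := by
      unfold walk
      exact measurable_const.add (Finset.measurable_sum _ fun i _ => hξmeas i)
    exact h.stronglyMeasurable)

namespace SpacetimeFKAux

/-! ### Generating function facts -/

noncomputable def Qf (p : ℕ → ℝ) (s : ℝ) : ℝ := 1 - ∑' k : ℕ, p k * (1 - s) ^ k

lemma summable_of_tsum_eq_one {β : Type*} {f : β → ℝ} (h : ∑' b, f b = 1) : Summable f := by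
  by_contra hs
  rw [tsum_eq_zero_of_not_summable hs] at h
  norm_num at h

lemma one_sub_pow_le {t : ℝ} (ht0 : 0 ≤ t) (ht1 : t ≤ 1) (k : ℕ) :
    1 - t ^ k ≤ (k : ℝ) * (1 - t) := by
  induction k with
  | zero => simp
  | succ k ih =>
    have htk0 : 0 ≤ t ^ k := pow_nonneg ht0 k
    have htk1 : t ^ k ≤ 1 := pow_le_one₀ ht0 ht1
    rw [pow_succ]
    push_cast
    nlinarith

section pfacts
variable {p : ℕ → ℝ} (hp0 : ∀ k, 0 ≤ p k) (hp1 : ∑' k, p k = 1)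

include hp0 hp1

lemma summable_geom_term {s : ℝ} (hs0 : 0 ≤ s) (hs1 : s ≤ 1) :
    Summable (fun k : ℕ => p k * (1 - s) ^ k) :=
  (summable_of_tsum_eq_one hp1).of_nonneg_of_le
    (fun k => mul_nonneg (hp0 k) (pow_nonneg (by linarith) k))
    (fun k => by
      have h1 : (1 - s) ^ k ≤ 1 := pow_le_one₀ (by linarith) (by linarith)
      nlinarith [hp0 k])

lemma Qf_nonneg {s : ℝ} (hs0 : 0 ≤ s) (hs1 : s ≤ 1) : 0 ≤ Qf p s := by
  have h : ∑' k : ℕ, p k * (1 - s) ^ k ≤ ∑' k, p k := by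
    refine Summable.tsum_le_tsum (fun k => ?_) (summable_geom_term hp0 hp1 hs0 hs1)
      (summable_of_tsum_eq_one hp1)
    have h1 : (1 - s) ^ k ≤ 1 := pow_le_one₀ (by linarith) (by linarith)
    nlinarith [hp0 k]
  unfold Qf
  rw [hp1] at h
  linarith

lemma Qf_le_one {s : ℝ} (hs0 : 0 ≤ s) (hs1 : s ≤ 1) : Qf p s ≤ 1 := by
  unfold Qf
  have h : 0 ≤ ∑' k : ℕ, p k * (1 - s) ^ k :=
    tsum_nonneg fun k => mul_nonneg (hp0 k) (pow_nonneg (by linarith) k)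
  linarith

lemma Qf_le_self (hpm_summ : Summable fun k : ℕ => (k : ℝ) * p k)
    (hpm : ∑' k : ℕ, (k : ℝ) * p k = 1) {s : ℝ} (hs0 : 0 ≤ s) (hs1 : s ≤ 1) :
    Qf p s ≤ s := by
  have ht0 : (0:ℝ) ≤ 1 - s := by linarith
  have ht1 : 1 - s ≤ 1 := by linarith
  have hsum1 : Summable (fun k : ℕ => p k * (1 - s) ^ k) :=
    summable_geom_term hp0 hp1 hs0 hs1
  have hsub : Summable (fun k : ℕ => p k - p k * (1 - s) ^ k) :=
    (summable_of_tsum_eq_one hp1).sub hsum1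
  have hbound : ∀ k : ℕ, p k - p k * (1 - s) ^ k ≤ ((k : ℝ) * p k) * s := by
    intro k
    have h := one_sub_pow_le ht0 ht1 k
    nlinarith [hp0 k]
  have h := Summable.tsum_le_tsum hbound hsub (hpm_summ.mul_right s)
  rw [Summable.tsum_sub (summable_of_tsum_eq_one hp1) hsum1, hp1, tsum_mul_right, hpm, one_mul] at h
  unfold Qf
  linarith

omit hp0 in
lemma mul_one_sub_Hfun {s : ℝ} (hs0 : 0 ≤ s) (hs1 : s ≤ 1) :
    s * (1 - Hfun p s) = Qf p s := by
  rcases eq_or_ne s 0 with rfl | hs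
  · simp [Hfun, Qf, hp1]
  · rw [Hfun, if_neg hs]
    show s * (1 - (s - Qf p s) / s) = Qf p s
    field_simp
    ring

lemma one_sub_Hfun_mem (hpm_summ : Summable fun k : ℕ => (k : ℝ) * p k)
    (hpm : ∑' k : ℕ, (k : ℝ) * p k = 1) {s : ℝ} (hs0 : 0 ≤ s) (hs1 : s ≤ 1) :
    0 ≤ 1 - Hfun p s ∧ 1 - Hfun p s ≤ 1 := by
  rcases eq_or_ne s 0 with rfl | hs
  · norm_num [Hfun]
  · have hspos : 0 < s := lt_of_le_of_ne hs0 (Ne.symm hs)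
    have hid := mul_one_sub_Hfun hp1 hs0 hs1
    have hQ0 := Qf_nonneg hp0 hp1 hs0 hs1
    have hQs := Qf_le_self hp0 hp1 hpm_summ hpm hs0 hs1
    exact ⟨by nlinarith, by nlinarith⟩

end pfacts

/-! ### σ-algebra and independence infrastructure -/

variable {Ω : Type} [m0 : MeasurableSpace Ω]

/-- The σ-algebra generated by the increments `ξ 1, …, ξ k`. -/
def mks (ξ : ℕ → Ω → ℤ) (k : ℕ) : MeasurableSpace Ω :=
  ⨆ i ∈ Set.Icc 1 k, MeasurableSpace.comap (ξ i) inferInstance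

lemma mks_le (ξ : ℕ → Ω → ℤ) (hξmeas : ∀ n, Measurable (ξ n)) (k : ℕ) : mks ξ k ≤ m0 :=
  iSup₂_le fun i _ => (hξmeas i).comap_le

lemma measurable_mks_xi (ξ : ℕ → Ω → ℤ) (k i : ℕ) (hi : i ∈ Set.Icc 1 k) :
    Measurable[mks ξ k] (ξ i) :=
  Measurable.of_comap_le
    (le_biSup (f := fun i => MeasurableSpace.comap (ξ i) inferInstance) hi)

lemma measurable_mks_walk (ξ : ℕ → Ω → ℤ) (x : ℤ) {k j : ℕ} (hj : j ≤ k) :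
    Measurable[mks ξ k] (walk ξ x j) := by
  have h : ∀ i ∈ Finset.Icc 1 j, Measurable[mks ξ k] (ξ i) := by
    intro i hi
    rw [Finset.mem_Icc] at hi
    exact measurable_mks_xi ξ k i (Set.mem_Icc.mpr ⟨hi.1, hi.2.trans hj⟩)
  show Measurable[mks ξ k] fun ω => x + ∑ i ∈ Finset.Icc 1 j, ξ i ω
  exact measurable_const.add (Finset.measurable_sum _ h)

lemma walkFiltration_le_mks (ξ : ℕ → Ω → ℤ) (hξmeas : ∀ n, Measurable (ξ n)) (x : ℤ) (k : ℕ) :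
    (walkFiltration ξ hξmeas x) k ≤ mks ξ k :=
  iSup₂_le (f := fun j (_ : j ≤ k) => MeasurableSpace.comap (walk ξ x j) inferInstance)
    fun j hj => (measurable_mks_walk ξ x hj).comap_le

lemma measurable_walkFiltration (ξ : ℕ → Ω → ℤ) (hξmeas : ∀ n, Measurable (ξ n))
    (x : ℤ) {k j : ℕ} (hj : j ≤ k) :
    Measurable[(walkFiltration ξ hξmeas x) k] (walk ξ x j) := by
  refine Measurable.of_comap_le ?_
  exact le_iSup₂ (f := fun j (_ : j ≤ k) =>
    MeasurableSpace.comap (walk ξ x j) inferInstance) j hj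

lemma indep_mks (P : Measure Ω) [IsProbabilityMeasure P] (ξ : ℕ → Ω → ℤ)
    (hξmeas : ∀ n, Measurable (ξ n))
    (hξindep : iIndepFun ξ P) (k : ℕ) :
    Indep (mks ξ k) (MeasurableSpace.comap (ξ (k+1)) inferInstance) P := by
  have hdisj : Disjoint (Set.Icc 1 k) ({k+1} : Set ℕ) := by
    simp [Set.disjoint_singleton_right]
  have h := indep_iSup_of_disjoint (m := fun i => MeasurableSpace.comap (ξ i) inferInstance)
    (fun i => (hξmeas i).comap_le) hξindep hdisj
  simpa [mks] using h

/-! ### The core set-integral identity -/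

lemma core_setIntegral (P : Measure Ω) [IsProbabilityMeasure P]
    (ξ : ℕ → Ω → ℤ) (hξmeas : ∀ n, Measurable (ξ n))
    (hξindep : iIndepFun ξ P)
    (a : ℤ → ℝ) (ha0 : ∀ y, 0 ≤ a y) (ha1 : ∑' y, a y = 1)
    (hξlaw : ∀ (n : ℕ) (y : ℤ), P {ω | ξ n ω = y} = ENNReal.ofReal (a (-y)))
    (x : ℤ) (k : ℕ)
    (g0 : ℤ → ℝ) (hg00 : ∀ z, 0 ≤ g0 z) (hg01 : ∀ z, g0 z ≤ 1)
    (G : Ω → ℝ) (hG : Measurable[mks ξ k] G) (hG0 : ∀ ω, 0 ≤ G ω) (hG1 : ∀ ω, G ω ≤ 1)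
    (s : Set Ω) (hs : MeasurableSet[mks ξ k] s) :
    ∫ ω in s, g0 (walk ξ x k ω + ξ (k+1) ω) * G ω ∂P
      = ∫ ω in s, (∑' y : ℤ, a y * g0 (walk ξ x k ω - y)) * G ω ∂P := by
  have hsa : Summable a := summable_of_tsum_eq_one ha1
  have hsaneg : Summable fun y : ℤ => a (-y) := (Equiv.neg ℤ).summable_iff.2 hsa
  have hmle := mks_le ξ hξmeas k
  have hsm0 : MeasurableSet s := hmle s hs
  have hGm0 : Measurable G := hG.mono hmle le_rfl
  have hXmk : Measurable[mks ξ k] (walk ξ x k) := measurable_mks_walk ξ x le_rfl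
  have hXm0 : Measurable (walk ξ x k) := hXmk.mono hmle le_rfl
  set X := walk ξ x k with hX
  set B : ℤ → Set Ω := fun y => {ω | ξ (k+1) ω = y} with hB
  have hBmeas : ∀ y, MeasurableSet (B y) := fun y => hξmeas (k+1) (measurableSet_singleton y)
  have hBP : ∀ y, P (B y) = ENNReal.ofReal (a (-y)) := fun y => hξlaw (k+1) y
  have hsum_ofReal : ∑' y : ℤ, ENNReal.ofReal (a (-y)) = 1 := by
    rw [← ENNReal.ofReal_tsum_of_nonneg (fun y => ha0 _) hsaneg]
    have h : ∑' y : ℤ, a (-y) = 1 := by rw [← ha1]; exact (Equiv.neg ℤ).tsum_eq a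
    rw [h, ENNReal.ofReal_one]
  have habs : ∀ (y : ℤ) (ω : Ω), |g0 (X ω + y) * G ω| ≤ 1 := by
    intro y ω
    rw [abs_mul, abs_of_nonneg (hg00 _), abs_of_nonneg (hG0 _)]
    nlinarith [hg00 (X ω + y), hG0 ω, hg01 (X ω + y), hG1 ω]
  -- Step 1: decompose as a tsum over the value of the increment
  have hpt : ∀ ω : Ω, g0 (X ω + ξ (k+1) ω) * G ω
      = ∑' y : ℤ, (B y).indicator (fun ω' => g0 (X ω' + y) * G ω') ω := by
    intro ω
    have h := tsum_eq_single (L := SummationFilter.unconditional ℤ) (f := fun y : ℤ =>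
        (B y).indicator (fun ω' => g0 (X ω' + y) * G ω') ω) (ξ (k+1) ω)
      (fun y hy => Set.indicator_of_notMem (s := B y) (a := ω) (fun h => hy (Eq.symm h)) (fun ω' => g0 (X ω' + y) * G ω'))
    rw [h]
    exact (Set.indicator_of_mem (s := B (ξ (k+1) ω)) (a := ω) rfl (fun ω' => g0 (X ω' + ξ (k+1) ω) * G ω')).symm
  have hmeas_ind : ∀ y : ℤ, Measurable ((B y).indicator (fun ω' => g0 (X ω' + y) * G ω')) :=
    fun y => (((measurable_from_top (f := fun z : ℤ => g0 (z + y))).comp hXm0).mul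
      hGm0).indicator (hBmeas y)
  have hnorm_ind : ∀ (y : ℤ) (ω : Ω),
      (‖(B y).indicator (fun ω' => g0 (X ω' + y) * G ω') ω‖₊ : ℝ≥0∞)
        ≤ (B y).indicator (fun _ => (1 : ℝ≥0∞)) ω := by
    intro y ω
    by_cases hω : ω ∈ B y
    · rw [Set.indicator_of_mem hω, Set.indicator_of_mem hω, ← enorm_eq_nnnorm, Real.enorm_eq_ofReal_abs]
      exact le_trans (ENNReal.ofReal_le_ofReal (habs y ω)) (by simp)
    · rw [Set.indicator_of_notMem hω, Set.indicator_of_notMem hω]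
      simp
  have hlint : ∀ y : ℤ,
      (∫⁻ ω, ‖(B y).indicator (fun ω' => g0 (X ω' + y) * G ω') ω‖₊ ∂(P.restrict s))
        ≤ ENNReal.ofReal (a (-y)) := by
    intro y
    calc ∫⁻ ω, ‖(B y).indicator (fun ω' => g0 (X ω' + y) * G ω') ω‖₊ ∂(P.restrict s)
        ≤ ∫⁻ ω, (B y).indicator (fun _ => (1:ℝ≥0∞)) ω ∂(P.restrict s) :=
          lintegral_mono (hnorm_ind y)
      _ ≤ (P.restrict s) (B y) := lintegral_indicator_one_le _
      _ ≤ P (B y) := Measure.restrict_apply_le s (B y)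
      _ = ENNReal.ofReal (a (-y)) := hBP y
  have hne : (∑' y : ℤ, ∫⁻ ω, ‖(B y).indicator (fun ω' => g0 (X ω' + y) * G ω') ω‖₊
      ∂(P.restrict s)) ≠ ⊤ := by
    refine ne_of_lt (lt_of_le_of_lt (ENNReal.tsum_le_tsum hlint) ?_)
    rw [hsum_ofReal]
    exact ENNReal.one_lt_top
  have hstep1 : ∫ ω in s, g0 (X ω + ξ (k+1) ω) * G ω ∂P
      = ∑' y : ℤ, ∫ ω in s, (B y).indicator (fun ω' => g0 (X ω' + y) * G ω') ω ∂P := by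
    rw [show (fun ω => g0 (X ω + ξ (k+1) ω) * G ω)
      = fun ω => ∑' y : ℤ, (B y).indicator (fun ω' => g0 (X ω' + y) * G ω') ω from funext hpt]
    exact integral_tsum (fun y => (hmeas_ind y).aestronglyMeasurable) hne
  -- Step 2: evaluate each term using independence
  have hstep2 : ∀ y : ℤ, ∫ ω in s, (B y).indicator (fun ω' => g0 (X ω' + y) * G ω') ω ∂P
      = a (-y) * ∫ ω in s, g0 (X ω + y) * G ω ∂P := by
    intro y
    have hinner_meas : Measurable fun ω => g0 (X ω + y) * G ω :=
      ((measurable_from_top (f := fun z : ℤ => g0 (z + y))).comp hXm0).mul hGm0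
    have h1 : ∫ ω in s, (B y).indicator (fun ω' => g0 (X ω' + y) * G ω') ω ∂P
        = ∫ ω, ((B y).indicator (fun _ => (1:ℝ)) ω)
            * (s.indicator (fun ω' => g0 (X ω' + y) * G ω') ω) ∂P := by
      rw [← integral_indicator hsm0]
      congr 1
      funext ω
      by_cases h1 : ω ∈ s <;> by_cases h2 : ω ∈ B y <;>
        simp [Set.indicator_of_mem, Set.indicator_of_notMem, h1, h2]
    rw [h1]
    have hufun : Measurable[MeasurableSpace.comap (ξ (k+1)) inferInstance]
        ((B y).indicator (fun _ => (1:ℝ))) := by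
      refine measurable_const.indicator ?_
      exact ⟨{y}, measurableSet_singleton y, rfl⟩
    have hwfun : Measurable[mks ξ k] (s.indicator (fun ω' => g0 (X ω' + y) * G ω')) := by
      refine Measurable.indicator ?_ hs
      exact ((measurable_from_top (f := fun z : ℤ => g0 (z + y))).comp hXmk).mul hG
    have hindf : IndepFun ((B y).indicator (fun _ => (1:ℝ)))
        (s.indicator (fun ω' => g0 (X ω' + y) * G ω')) P := by
      rw [IndepFun_iff_Indep]
      refine indep_of_indep_of_le_left (indep_of_indep_of_le_right
        ((indep_mks P ξ hξmeas hξindep k).symm) ?_) ?_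
      · exact hwfun.comap_le
      · exact hufun.comap_le
    have hu_int : Integrable ((B y).indicator (fun _ => (1:ℝ))) P :=
      (integrable_const 1).indicator (hBmeas y)
    have hw_int : Integrable (s.indicator (fun ω' => g0 (X ω' + y) * G ω')) P := by
      refine Integrable.indicator ?_ hsm0
      refine Integrable.mono' (integrable_const 1) hinner_meas.aestronglyMeasurable
        (ae_of_all _ fun ω => ?_)
      rw [Real.norm_eq_abs]
      exact habs y ω
    have hmul : (fun ω => ((B y).indicator (fun _ => (1:ℝ)) ω)
        * (s.indicator (fun ω' => g0 (X ω' + y) * G ω') ω))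
        = ((B y).indicator (fun _ => (1:ℝ)) * s.indicator (fun ω' => g0 (X ω' + y) * G ω')) :=
      rfl
    rw [hmul, hindf.integral_mul_eq_mul_integral hu_int.aestronglyMeasurable hw_int.aestronglyMeasurable]
    congr 1
    · rw [integral_indicator_const (1:ℝ) (hBmeas y), measureReal_def, hBP y, smul_eq_mul, mul_one,
        ENNReal.toReal_ofReal (ha0 (-y))]
    · exact integral_indicator hsm0
  -- Step 3: resum
  have hmeas3 : ∀ y : ℤ, AEStronglyMeasurable (fun ω => a (-y) * (g0 (X ω + y) * G ω))
      (P.restrict s) := fun y =>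
    (measurable_const.mul (((measurable_from_top (f := fun z : ℤ => g0 (z + y))).comp
      hXm0).mul hGm0)).aestronglyMeasurable
  have hlint3 : ∀ y : ℤ,
      (∫⁻ ω, ‖a (-y) * (g0 (X ω + y) * G ω)‖₊ ∂(P.restrict s)) ≤ ENNReal.ofReal (a (-y)) := by
    intro y
    have hb : ∀ ω, (‖a (-y) * (g0 (X ω + y) * G ω)‖₊ : ℝ≥0∞) ≤ ENNReal.ofReal (a (-y)) := by
      intro ω
      rw [← enorm_eq_nnnorm, Real.enorm_eq_ofReal_abs]
      refine ENNReal.ofReal_le_ofReal ?_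
      rw [abs_mul, abs_of_nonneg (ha0 (-y))]
      nlinarith [habs y ω, ha0 (-y), abs_nonneg (g0 (X ω + y) * G ω)]
    calc ∫⁻ ω, ‖a (-y) * (g0 (X ω + y) * G ω)‖₊ ∂(P.restrict s)
        ≤ ∫⁻ _, ENNReal.ofReal (a (-y)) ∂(P.restrict s) := lintegral_mono hb
      _ = ENNReal.ofReal (a (-y)) * (P.restrict s) Set.univ := lintegral_const _
      _ ≤ ENNReal.ofReal (a (-y)) * 1 := by
          refine mul_le_mul_right ?_ _
          rw [Measure.restrict_apply_univ]
          exact prob_le_one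
      _ = ENNReal.ofReal (a (-y)) := mul_one _
  have hne3 : (∑' y : ℤ, ∫⁻ ω, ‖a (-y) * (g0 (X ω + y) * G ω)‖₊ ∂(P.restrict s)) ≠ ⊤ := by
    refine ne_of_lt (lt_of_le_of_lt (ENNReal.tsum_le_tsum hlint3) ?_)
    rw [hsum_ofReal]
    exact ENNReal.one_lt_top
  have hpt3 : ∀ ω : Ω, ∑' y : ℤ, a (-y) * (g0 (X ω + y) * G ω)
      = (∑' y : ℤ, a y * g0 (X ω - y)) * G ω := by
    intro ω
    have h1 : ∑' y : ℤ, a (-y) * g0 (X ω + y) = ∑' y : ℤ, a y * g0 (X ω - y) := by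
      calc ∑' y : ℤ, a (-y) * g0 (X ω + y)
          = ∑' y : ℤ, a (Equiv.neg ℤ y) * g0 (X ω - Equiv.neg ℤ y) :=
            tsum_congr fun y => by simp
        _ = ∑' y : ℤ, a y * g0 (X ω - y) := (Equiv.neg ℤ).tsum_eq fun y => a y * g0 (X ω - y)
    rw [← h1, ← tsum_mul_right]
    exact tsum_congr fun y => (mul_assoc _ _ _).symm
  have hstep3 : ∑' y : ℤ, a (-y) * ∫ ω in s, g0 (X ω + y) * G ω ∂P
      = ∫ ω in s, (∑' y : ℤ, a y * g0 (X ω - y)) * G ω ∂P := by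
    calc ∑' y : ℤ, a (-y) * ∫ ω in s, g0 (X ω + y) * G ω ∂P
        = ∑' y : ℤ, ∫ ω in s, a (-y) * (g0 (X ω + y) * G ω) ∂P :=
          tsum_congr fun y => (integral_const_mul _ _).symm
      _ = ∫ ω in s, ∑' y : ℤ, a (-y) * (g0 (X ω + y) * G ω) ∂P :=
          (integral_tsum hmeas3 hne3).symm
      _ = ∫ ω in s, (∑' y : ℤ, a y * g0 (X ω - y)) * G ω ∂P :=
          integral_congr_ae (ae_of_all _ fun ω => hpt3 ω)
  rw [hstep1, tsum_congr hstep2, hstep3]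

end SpacetimeFKAux

open SpacetimeFKAux

/-- Proposition 12 of Lalley–Shao, space-time Feynman–Kac formula:
for every `n` and every starting point `x`, the process
`Z_k = v_{n-k}(W_k) · ∏_{j=1}^{k} (1 - H(v_{n-j}(W_j)))`, `k = 0, …, n`, is a
martingale for the natural filtration of the walk (adapted, and with the martingale
conditional-expectation property up to time `n`); consequently, for `n ≤ m`,
`v_m(x) = E^x[ v_n(W_{m-n}) ∏_{j=1}^{m-n} (1 - H(v_{m-j}(W_j))) ]`. -/
theorem spacetime_fk_martingale
    (p : ℕ → ℝ) (a : ℤ → ℝ) (σ2 η2 r : ℝ)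
    -- offspring distribution: critical, variance σ2 ∈ (0,∞), finite third moment
    (hp0 : ∀ k, 0 ≤ p k)
    (hp1 : ∑' k, p k = 1)
    (hpmean_summ : Summable (fun k : ℕ => (k : ℝ) * p k))
    (hpmean : ∑' k : ℕ, (k : ℝ) * p k = 1)
    (hp2summ : Summable (fun k : ℕ => (k : ℝ) ^ 2 * p k))
    (hσ2 : σ2 = (∑' k : ℕ, (k : ℝ) ^ 2 * p k) - 1)
    (hσ2pos : 0 < σ2)
    (hp3summ : Summable (fun k : ℕ => (k : ℝ) ^ 3 * p k))
    -- step distribution: mean 0, variance η2 ∈ (0,∞), finite r-th moment for some r > 4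
    (ha0 : ∀ y, 0 ≤ a y)
    (ha1 : ∑' y, a y = 1)
    (hamean_summ : Summable (fun y : ℤ => (y : ℝ) * a y))
    (hamean : ∑' y : ℤ, (y : ℝ) * a y = 0)
    (ha2summ : Summable (fun y : ℤ => (y : ℝ) ^ 2 * a y))
    (hη2 : η2 = ∑' y : ℤ, (y : ℝ) ^ 2 * a y)
    (hη2pos : 0 < η2)
    (hr : 4 < r)
    (harsumm : Summable (fun y : ℤ => |(y : ℝ)| ^ r * a y))
    -- v n x = P{M_n > x}: tail distribution of the rightmost position in generation n
    (v : ℕ → ℤ → ℝ)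
    (hv0 : ∀ x : ℤ, v 0 x = if x < 0 then 1 else 0)
    (hvrec : ∀ (n : ℕ) (x : ℤ),
      v (n + 1) x = ∑' y : ℤ, a y * (1 - ∑' k : ℕ, p k * (1 - v n (x - y)) ^ k))
    -- the random walk W with i.i.d. increments of law P{increment = y} = a(-y);
    -- walk ξ x n ω = x + ξ₁ + ⋯ + ξₙ is the walk started at x
    {Ω : Type} [MeasurableSpace Ω] (P : Measure Ω) [IsProbabilityMeasure P]
    (ξ : ℕ → Ω → ℤ)
    (hξmeas : ∀ n, Measurable (ξ n))
    (hξindep : iIndepFun ξ P)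
    (hξlaw : ∀ (n : ℕ) (y : ℤ), P {ω | ξ n ω = y} = ENNReal.ofReal (a (-y)))
 :
    (∀ (x : ℤ) (n : ℕ),
      (∀ k : ℕ, k ≤ n →
        StronglyMeasurable[(walkFiltration ξ hξmeas x) k]
          (fun ω : Ω => v (n - k) (walk ξ x k ω) *
            ∏ j ∈ Finset.Icc 1 k, (1 - Hfun p (v (n - j) (walk ξ x j ω)))))
      ∧ (∀ k : ℕ, k + 1 ≤ n →
          P[(fun ω : Ω => v (n - (k + 1)) (walk ξ x (k + 1) ω) *
              ∏ j ∈ Finset.Icc 1 (k + 1), (1 - Hfun p (v (n - j) (walk ξ x j ω))))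
            | (walkFiltration ξ hξmeas x) k]
          =ᵐ[P] fun ω : Ω => v (n - k) (walk ξ x k ω) *
              ∏ j ∈ Finset.Icc 1 k, (1 - Hfun p (v (n - j) (walk ξ x j ω)))))
    ∧ ∀ (n m : ℕ), n ≤ m → ∀ x : ℤ,
        v m x = ∫ ω, v n (walk ξ x (m - n) ω) *
            ∏ j ∈ Finset.Icc 1 (m - n), (1 - Hfun p (v (m - j) (walk ξ x j ω))) ∂P := by
  classical
  have hsa : Summable a := summable_of_tsum_eq_one ha1
  -- v takes values in [0,1]
  have hv01 : ∀ (n : ℕ) (z : ℤ), 0 ≤ v n z ∧ v n z ≤ 1 := by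
    intro n
    induction n with
    | zero => intro z; rw [hv0]; split <;> norm_num
    | succ n ih =>
      intro z
      have hvr : v (n+1) z = ∑' y : ℤ, a y * Qf p (v n (z - y)) := hvrec n z
      have hterm : ∀ y : ℤ, 0 ≤ a y * Qf p (v n (z - y))
          ∧ a y * Qf p (v n (z - y)) ≤ a y := by
        intro y
        have h1 := (ih (z - y)).1
        have h2 := (ih (z - y)).2
        have hq0 := Qf_nonneg hp0 hp1 h1 h2
        have hq1 := Qf_le_one hp0 hp1 h1 h2
        exact ⟨mul_nonneg (ha0 y) hq0, by nlinarith [ha0 y]⟩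
      have hsumm : Summable (fun y : ℤ => a y * Qf p (v n (z - y))) :=
        hsa.of_nonneg_of_le (fun y => (hterm y).1) (fun y => (hterm y).2)
      rw [hvr]
      constructor
      · exact tsum_nonneg fun y => (hterm y).1
      · calc ∑' y : ℤ, a y * Qf p (v n (z - y)) ≤ ∑' y, a y :=
              Summable.tsum_le_tsum (fun y => (hterm y).2) hsumm hsa
          _ = 1 := ha1
  have hH01 : ∀ (n : ℕ) (z : ℤ), 0 ≤ 1 - Hfun p (v n z) ∧ 1 - Hfun p (v n z) ≤ 1 := fun n z =>
    one_sub_Hfun_mem hp0 hp1 hpmean_summ hpmean (hv01 n z).1 (hv01 n z).2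
  -- measurability of the process
  have hZm : ∀ (x : ℤ) (n k : ℕ), Measurable[(walkFiltration ξ hξmeas x) k]
      (fun ω : Ω => v (n - k) (walk ξ x k ω) *
        ∏ j ∈ Finset.Icc 1 k, (1 - Hfun p (v (n - j) (walk ξ x j ω)))) := by
    intro x n k
    have h1 : Measurable[(walkFiltration ξ hξmeas x) k] fun ω => v (n - k) (walk ξ x k ω) :=
      (measurable_from_top (f := v (n - k))).comp
        (measurable_walkFiltration ξ hξmeas x le_rfl)
    refine h1.mul (Finset.measurable_prod _ fun j hj => ?_)
    exact (measurable_from_top (f := fun z : ℤ => 1 - Hfun p (v (n - j) z))).comp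
      (measurable_walkFiltration ξ hξmeas x (Finset.mem_Icc.mp hj).2)
  -- bounds
  have hGb : ∀ (x : ℤ) (n k : ℕ) (ω : Ω),
      0 ≤ (∏ j ∈ Finset.Icc 1 k, (1 - Hfun p (v (n - j) (walk ξ x j ω))))
      ∧ (∏ j ∈ Finset.Icc 1 k, (1 - Hfun p (v (n - j) (walk ξ x j ω)))) ≤ 1 := by
    intro x n k ω
    exact ⟨Finset.prod_nonneg fun j _ => (hH01 _ _).1,
      Finset.prod_le_one (fun j _ => (hH01 _ _).1) (fun j _ => (hH01 _ _).2)⟩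
  have hZb : ∀ (x : ℤ) (n k : ℕ) (ω : Ω),
      0 ≤ v (n - k) (walk ξ x k ω) *
        ∏ j ∈ Finset.Icc 1 k, (1 - Hfun p (v (n - j) (walk ξ x j ω)))
      ∧ v (n - k) (walk ξ x k ω) *
        ∏ j ∈ Finset.Icc 1 k, (1 - Hfun p (v (n - j) (walk ξ x j ω))) ≤ 1 := by
    intro x n k ω
    have h1 := hGb x n k ω
    have h2 := hv01 (n - k) (walk ξ x k ω)
    exact ⟨mul_nonneg h2.1 h1.1, by nlinarith⟩
  have hZint : ∀ (x : ℤ) (n k : ℕ), Integrable (fun ω : Ω => v (n - k) (walk ξ x k ω) *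
      ∏ j ∈ Finset.Icc 1 k, (1 - Hfun p (v (n - j) (walk ξ x j ω)))) P := by
    intro x n k
    refine Integrable.mono' (integrable_const 1)
      (((hZm x n k).mono ((walkFiltration ξ hξmeas x).le k) le_rfl).aestronglyMeasurable)
      (ae_of_all _ fun ω => ?_)
    rw [Real.norm_eq_abs, abs_le]
    exact ⟨by linarith [(hZb x n k ω).1], (hZb x n k ω).2⟩
  -- the martingale property
  have key : ∀ (x : ℤ) (n k : ℕ), k + 1 ≤ n →
      P[(fun ω : Ω => v (n - (k + 1)) (walk ξ x (k + 1) ω) *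
          ∏ j ∈ Finset.Icc 1 (k + 1), (1 - Hfun p (v (n - j) (walk ξ x j ω))))
        | (walkFiltration ξ hξmeas x) k]
        =ᵐ[P] fun ω : Ω => v (n - k) (walk ξ x k ω) *
          ∏ j ∈ Finset.Icc 1 k, (1 - Hfun p (v (n - j) (walk ξ x j ω))) := by
    intro x n k hk
    have hm : (walkFiltration ξ hξmeas x) k ≤ (inferInstance : MeasurableSpace Ω) :=
      (walkFiltration ξ hξmeas x).le k
    haveI : IsFiniteMeasure (P.trim hm) := isFiniteMeasure_trim hm
    refine (ae_eq_condExp_of_forall_setIntegral_eq hm (hZint x n (k+1))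
      (fun s _ _ => (hZint x n k).integrableOn)
      (fun s hs _ => ?_)
      ((hZm x n k).stronglyMeasurable.aestronglyMeasurable)).symm
    have hs' : MeasurableSet[mks ξ k] s := walkFiltration_le_mks ξ hξmeas x k s hs
    have hGmk : Measurable[mks ξ k]
        (fun ω : Ω => ∏ j ∈ Finset.Icc 1 k, (1 - Hfun p (v (n - j) (walk ξ x j ω)))) :=
      Finset.measurable_prod _ fun j hj =>
        (measurable_from_top (f := fun z : ℤ => 1 - Hfun p (v (n - j) z))).comp
          (measurable_mks_walk ξ x (Finset.mem_Icc.mp hj).2)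
    have hcore := core_setIntegral P ξ hξmeas hξindep a ha0 ha1 hξlaw x k
      (fun z => Qf p (v (n - (k+1)) z))
      (fun z => Qf_nonneg hp0 hp1 (hv01 _ z).1 (hv01 _ z).2)
      (fun z => Qf_le_one hp0 hp1 (hv01 _ z).1 (hv01 _ z).2)
      (fun ω : Ω => ∏ j ∈ Finset.Icc 1 k, (1 - Hfun p (v (n - j) (walk ξ x j ω))))
      hGmk (fun ω => (hGb x n k ω).1) (fun ω => (hGb x n k ω).2) s hs'
    have hfeq : ∀ ω : Ω, v (n - (k + 1)) (walk ξ x (k + 1) ω) *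
        ∏ j ∈ Finset.Icc 1 (k + 1), (1 - Hfun p (v (n - j) (walk ξ x j ω)))
        = Qf p (v (n - (k+1)) (walk ξ x k ω + ξ (k+1) ω)) *
          ∏ j ∈ Finset.Icc 1 k, (1 - Hfun p (v (n - j) (walk ξ x j ω))) := by
      intro ω
      have hw : walk ξ x (k+1) ω = walk ξ x k ω + ξ (k+1) ω := by
        show x + ∑ i ∈ Finset.Icc 1 (k+1), ξ i ω
          = (x + ∑ i ∈ Finset.Icc 1 k, ξ i ω) + ξ (k+1) ω
        rw [Finset.sum_Icc_succ_top (by omega : 1 ≤ k + 1)]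
        ring
      rw [Finset.prod_Icc_succ_top (by omega : 1 ≤ k + 1), hw]
      have hid := mul_one_sub_Hfun (p := p) hp1
        (hv01 (n - (k+1)) (walk ξ x k ω + ξ (k+1) ω)).1
        (hv01 (n - (k+1)) (walk ξ x k ω + ξ (k+1) ω)).2
      rw [← hid]
      ring
    calc ∫ ω in s, v (n - k) (walk ξ x k ω) *
          ∏ j ∈ Finset.Icc 1 k, (1 - Hfun p (v (n - j) (walk ξ x j ω))) ∂P
        = ∫ ω in s, (∑' y : ℤ, a y * Qf p (v (n - (k+1)) (walk ξ x k ω - y))) *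
            ∏ j ∈ Finset.Icc 1 k, (1 - Hfun p (v (n - j) (walk ξ x j ω))) ∂P := by
          refine integral_congr_ae (ae_of_all _ fun ω => ?_)
          have hnk : n - k = (n - (k+1)) + 1 := by omega
          have h := hvrec (n - (k + 1)) (walk ξ x k ω)
          rw [← hnk] at h
          exact congrArg
            (· * ∏ j ∈ Finset.Icc 1 k, (1 - Hfun p (v (n - j) (walk ξ x j ω)))) h
      _ = ∫ ω in s, Qf p (v (n - (k+1)) (walk ξ x k ω + ξ (k+1) ω)) *
            ∏ j ∈ Finset.Icc 1 k, (1 - Hfun p (v (n - j) (walk ξ x j ω))) ∂P := hcore.symm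
      _ = ∫ ω in s, v (n - (k + 1)) (walk ξ x (k + 1) ω) *
            ∏ j ∈ Finset.Icc 1 (k + 1), (1 - Hfun p (v (n - j) (walk ξ x j ω))) ∂P :=
          integral_congr_ae (ae_of_all _ fun ω => (hfeq ω).symm)
  refine ⟨fun x n => ⟨fun k _ => (hZm x n k).stronglyMeasurable,
    fun k hk => key x n k hk⟩, ?_⟩
  intro n m hnm x
  have claim : ∀ k, k ≤ m → (∫ ω, v (m - k) (walk ξ x k ω) *
      ∏ j ∈ Finset.Icc 1 k, (1 - Hfun p (v (m - j) (walk ξ x j ω))) ∂P) = v m x := by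
    intro k
    induction k with
    | zero =>
      intro _
      have h0 : ∀ ω : Ω, v (m - 0) (walk ξ x 0 ω) *
          ∏ j ∈ Finset.Icc 1 0, (1 - Hfun p (v (m - j) (walk ξ x j ω))) = v m x := by
        intro ω
        have hw0 : walk ξ x 0 ω = x := by simp [walk]
        rw [show Finset.Icc 1 0 = (∅ : Finset ℕ) from Finset.Icc_eq_empty (by omega), hw0]
        simp
      rw [integral_congr_ae (ae_of_all _ h0), integral_const, probReal_univ]
      simp
    | succ k ih =>
      intro hk1
      have hm : (walkFiltration ξ hξmeas x) k ≤ (inferInstance : MeasurableSpace Ω) :=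
        (walkFiltration ξ hξmeas x).le k
      haveI : IsFiniteMeasure (P.trim hm) := isFiniteMeasure_trim hm
      calc ∫ ω, v (m - (k+1)) (walk ξ x (k+1) ω) *
            ∏ j ∈ Finset.Icc 1 (k+1), (1 - Hfun p (v (m - j) (walk ξ x j ω))) ∂P
          = ∫ ω, (P[(fun ω : Ω => v (m - (k + 1)) (walk ξ x (k + 1) ω) *
              ∏ j ∈ Finset.Icc 1 (k + 1), (1 - Hfun p (v (m - j) (walk ξ x j ω))))
            | (walkFiltration ξ hξmeas x) k]) ω ∂P := (integral_condExp hm).symm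
        _ = ∫ ω, v (m - k) (walk ξ x k ω) *
              ∏ j ∈ Finset.Icc 1 k, (1 - Hfun p (v (m - j) (walk ξ x j ω))) ∂P :=
            integral_congr_ae (key x m k hk1)
        _ = v m x := ih (by omega)
  have h := claim (m - n) (by omega)
  rw [show m - (m - n) = n from by omega] at h
  exact h.symm
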